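/- The n-step out-of-order block Gibbs kernel satisfies K*^n((y,z,x),(dy',dz',dx')) = ∫ Π_{X|Z}(dx'|z') Π_{Z|XY}(dz'|x'',y') (ν_{(x,z)} K_{XY}^{n−1})(dx'',dy'), where ν_{(x,z)} is the distribution placing X = x with probability one and Y ~ Π_{Y|XZ}(·|x,z). -/

import Mathlib

open MeasureTheory ProbabilityTheory

noncomputable def tvDist {E : Type*} [MeasurableSpace E] (μ ν : Measure E) : ℝ :=
  ⨆ A : {A : Set E // MeasurableSet A}, |(μ A.1).toReal - (ν A.1).toReal|

noncomputable def kpow {E : Type*} [MeasurableSpace E] (P : Kernel E E) : ℕ → Kernel E E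
  | 0 => Kernel.id
  | n + 1 => (kpow P n) ∘ₖ P

section Aux

variable {α β γ : Type*} [MeasurableSpace α] [MeasurableSpace β] [MeasurableSpace γ]

theorem aux_bind_map (μ : Measure α) {f : α → β} {g : β → Measure γ}
    (hf : Measurable f) (hg : Measurable g) :
    (μ.map f).bind g = μ.bind fun a => g (f a) := by
  rw [← Measure.bind_dirac_eq_map μ hf]
  calc (μ.bind fun x => Measure.dirac (f x)).bind g
      = μ.bind (fun a => (Measure.dirac (f a)).bind g) :=
        Measure.bind_bind (Measure.measurable_dirac.comp hf).aemeasurable hg.aemeasurable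
    _ = μ.bind fun a => g (f a) :=
        congrArg (Measure.bind μ) (funext fun a => Measure.dirac_bind hg (f a))

theorem aux_map_bind (μ : Measure α) {f : α → Measure β} {g : β → γ}
    (hf : Measurable f) (hg : Measurable g) :
    (μ.bind f).map g = μ.bind fun a => (f a).map g := by
  rw [← Measure.bind_dirac_eq_map _ hg]
  calc (μ.bind f).bind (fun x => Measure.dirac (g x))
      = μ.bind (fun a => (f a).bind fun x => Measure.dirac (g x)) :=
        Measure.bind_bind hf.aemeasurable (Measure.measurable_dirac.comp hg).aemeasurable
    _ = μ.bind fun a => (f a).map g :=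
        congrArg (Measure.bind μ) (funext fun a => Measure.bind_dirac_eq_map (f a) hg)

theorem kpow_markov {E : Type*} [MeasurableSpace E] (P : Kernel E E) [IsMarkovKernel P] :
    ∀ n, IsMarkovKernel (kpow P n)
  | 0 => by rw [kpow]; infer_instance
  | n + 1 => by
      rw [kpow]
      haveI := kpow_markov P n
      infer_instance

theorem kpow_shift {A B : Type*} [MeasurableSpace A] [MeasurableSpace B]
    (F : Kernel B A) (G : Kernel A B) [IsMarkovKernel F] [IsMarkovKernel G] :
    ∀ m : ℕ, kpow (F ∘ₖ G) (m + 1) = F ∘ₖ ((kpow (G ∘ₖ F) m) ∘ₖ G)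
  | 0 => by
      rw [kpow, kpow, kpow, Kernel.id_comp, Kernel.id_comp]
  | m + 1 => by
      haveI := kpow_markov (G ∘ₖ F) m
      rw [kpow, kpow_shift F G m, kpow,
        Kernel.comp_assoc F ((kpow (G ∘ₖ F) m) ∘ₖ G) (F ∘ₖ G),
        Kernel.comp_assoc (kpow (G ∘ₖ F) m) G (F ∘ₖ G),
        ← Kernel.comp_assoc G F G,
        ← Kernel.comp_assoc (kpow (G ∘ₖ F) m) (G ∘ₖ F) G]

end Aux

/-- Representation of the n-step out-of-order kernel in terms of the (X,Y)-marginal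
block Gibbs kernel started from ν_{(x,z)}. -/
theorem Kstar_pow_eq
    {X Y Z : Type*} [MeasurableSpace X] [MeasurableSpace Y] [MeasurableSpace Z]
    (Pi : Measure (X × Y × Z)) [IsProbabilityMeasure Pi]
    (PXgZ : Kernel Z X) [IsMarkovKernel PXgZ]
    (PYgXZ : Kernel (X × Z) Y) [IsMarkovKernel PYgXZ]
    (PZgXY : Kernel (X × Y) Z) [IsMarkovKernel PZgXY]
    (PXYgZ : Kernel Z (X × Y)) [IsMarkovKernel PXYgZ]
    (hseq : ∀ z : Z, PXYgZ z = (PXgZ z).bind fun x => (PYgXZ (x, z)).map fun y => (x, y))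
    (KXY : Kernel (X × Y) (X × Y))
    (hKXY : ∀ q : X × Y, KXY q = (PZgXY q).bind fun z => PXYgZ z)
    (Kstar : Kernel (Y × Z × X) (Y × Z × X))
    (hKstar : ∀ p : Y × Z × X, Kstar p =
      (PYgXZ (p.2.2, p.2.1)).bind fun y' =>
        (PZgXY (p.2.2, y')).bind fun z' =>
          (PXgZ z').map fun x' => (y', z', x'))
    :
    ∀ (p : Y × Z × X) (n : ℕ), 1 ≤ n →
      (kpow Kstar n) p =
        ((((PYgXZ (p.2.2, p.2.1)).map fun y => (p.2.2, y)).bind fun q =>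
            (kpow KXY (n - 1)) q).bind
          fun q => (PZgXY q).bind fun z' => (PXgZ z').map fun x' => (q.2, z', x')) := by
  -- the kernel q ↦ law of (q.2, z', x') with z' ~ PZgXY q, x' ~ PXgZ z'
  set Fk : Kernel (X × Y) (Y × Z × X) :=
    (Kernel.deterministic (Prod.snd : X × Y → Y) measurable_snd) ×ₖ
      ((Kernel.id ×ₖ PXgZ) ∘ₖ PZgXY) with hFk
  -- the kernel p ↦ ν_{(x,z)} = law of (x, y) with y ~ PYgXZ (x,z), x = p.2.2
  set Nk : Kernel (Y × Z × X) (X × Y) :=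
    (Kernel.deterministic (fun p : Y × Z × X => p.2.2) (by fun_prop)) ×ₖ
      (PYgXZ.comap (fun p : Y × Z × X => (p.2.2, p.2.1)) (by fun_prop)) with hNk
  have hW : ∀ z : Z, (Kernel.id ×ₖ PXgZ) z = (PXgZ z).map (Prod.mk z) := by
    intro z
    rw [Kernel.prod_apply, Kernel.id_apply, Measure.dirac_prod]
  have hNkap : ∀ p : Y × Z × X, Nk p = (PYgXZ (p.2.2, p.2.1)).map fun y => (p.2.2, y) := by
    intro p
    rw [hNk, Kernel.prod_apply, Kernel.deterministic_apply, Kernel.comap_apply,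
      Measure.dirac_prod]
  have hFkap : ∀ q : X × Y, Fk q =
      (PZgXY q).bind fun z' => (PXgZ z').map fun x' => (q.2, z', x') := by
    intro q
    rw [hFk, Kernel.prod_apply, Kernel.deterministic_apply, Measure.dirac_prod,
      Kernel.comp_apply,
      aux_map_bind _ (Kernel.measurable _) measurable_prodMk_left]
    refine congrArg (Measure.bind (PZgXY q)) (funext fun z => ?_)
    rw [hW z, Measure.map_map measurable_prodMk_left measurable_prodMk_left]
    rfl
  -- Kstar = Fk ∘ₖ Nk
  have hA : Kstar = Fk ∘ₖ Nk := by
    ext1 p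
    rw [Kernel.comp_apply, hNkap p,
      aux_bind_map _ measurable_prodMk_left (Kernel.measurable Fk), hKstar p]
    refine congrArg (Measure.bind _) (funext fun y' => ?_)
    rw [hFkap (p.2.2, y')]
  -- KXY = Nk ∘ₖ Fk
  have hB : KXY = Nk ∘ₖ Fk := by
    ext1 q
    have hmeas : Measurable fun z => (PXgZ z).map fun x' => (q.2, z, x') := by
      have : (fun z => (PXgZ z).map fun x' => (q.2, z, x')) =
          fun z => ((Kernel.id ×ₖ PXgZ) z).map (Prod.mk q.2) := by
        funext z
        rw [hW z, Measure.map_map measurable_prodMk_left measurable_prodMk_left]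
        rfl
      rw [this]
      exact (Measure.measurable_map _ measurable_prodMk_left).comp (Kernel.measurable _)
    rw [Kernel.comp_apply, hFkap q,
      Measure.bind_bind hmeas.aemeasurable (Kernel.measurable Nk).aemeasurable, hKXY q]
    refine congrArg (Measure.bind _) (funext fun z => ?_)
    rw [aux_bind_map _ (by fun_prop) (Kernel.measurable Nk), hseq z]
    refine congrArg (Measure.bind _) (funext fun x' => ?_)
    rw [hNkap (q.2, z, x')]
  -- conclude
  intro p n hn
  obtain ⟨m, rfl⟩ : ∃ m, n = m + 1 := ⟨n - 1, (Nat.succ_pred_eq_of_pos hn).symm⟩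
  have hpow : kpow Kstar (m + 1) = Fk ∘ₖ ((kpow KXY m) ∘ₖ Nk) := by
    rw [hA, kpow_shift Fk Nk m, ← hB]
  rw [hpow, Kernel.comp_apply, Kernel.comp_apply, Nat.add_sub_cancel, ← hNkap p]
  have : (fun q : X × Y =>
      (PZgXY q).bind fun z' => (PXgZ z').map fun x' => (q.2, z', x')) = Fk :=
    funext fun q => (hFkap q).symm
  rw [this]
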